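/- arXiv:1702.03530 — 4 statements merged into one kernel-verified Lean document; each statement's English description precedes it below -/
import Mathlib

section
/- Lemma 30 (subDAG lemma): Let C be a graphoid of CI relations on [p] and let G_τ be a minimal I-MAP with respect to C. Let G be a DAG that is Markov equivalent to G_τ and is obtained from G_τ by reversing a single covered arrow of G_τ. Then for every linear extension π of G, the minimal I-MAP G_π is a subDAG of G; that is, every arrow of G_π is an arrow of G. -/
open scoped Classical

namespace GSP

/-- A DAG on the node set `Fin p`, given by its finite set of arrows,
which must form an acyclic relation. -/
structure DAG (p : ℕ) where
  arrows : Finset (Fin p × Fin p)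
  acyclic : ∀ i : Fin p, ¬ Relation.TransGen (fun a b => (a, b) ∈ arrows) i i

variable {p : ℕ}

namespace DAG

/-- `a → b` is an arrow of `G`. -/
def Arrow (G : DAG p) (a b : Fin p) : Prop := (a, b) ∈ G.arrows

/-- The number of arrows of `G`, denoted `|G|`. -/
def numArrows (G : DAG p) : ℕ := G.arrows.card

/-- The set of parents of a node `j` in `G`. -/
noncomputable def parents (G : DAG p) (j : Fin p) : Finset (Fin p) :=
  Finset.univ.filter fun i => G.Arrow i j

/-- Adjacency: `a` and `b` are joined by an arrow in some direction. -/
def Adj (G : DAG p) (a b : Fin p) : Prop := G.Arrow a b ∨ G.Arrow b a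

/-- `b` is a collider between `a` and `c`: both arrows point into `b`. -/
def Collider (G : DAG p) (a b c : Fin p) : Prop := G.Arrow a b ∧ G.Arrow c b

/-- `d` is a (reflexive) descendant of `a` in `G`. -/
def Desc (G : DAG p) (a d : Fin p) : Prop := Relation.ReflTransGen G.Arrow a d

/-- The list of nodes `l` is a d-connecting walk given `S`: consecutive nodes
are adjacent, every internal collider lies in `S` or has a descendant in `S`,
and no internal non-collider lies in `S`. -/
def DConnWalk (G : DAG p) (S : Finset (Fin p)) (l : List (Fin p)) : Prop :=
  l.Chain' G.Adj ∧
  ∀ (m : ℕ) (_ : 1 ≤ m) (h2 : m + 1 < l.length),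
    (G.Collider (l.get ⟨m - 1, by omega⟩) (l.get ⟨m, by omega⟩) (l.get ⟨m + 1, h2⟩) →
      ∃ d ∈ S, G.Desc (l.get ⟨m, by omega⟩) d) ∧
    (¬ G.Collider (l.get ⟨m - 1, by omega⟩) (l.get ⟨m, by omega⟩) (l.get ⟨m + 1, h2⟩) →
      l.get ⟨m, by omega⟩ ∉ S)

/-- `i` and `j` are d-connected given `S` in `G`. -/
def DConn (G : DAG p) (i j : Fin p) (S : Finset (Fin p)) : Prop :=
  ∃ l : List (Fin p), l.head? = some i ∧ l.getLast? = some j ∧ G.DConnWalk S l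

/-- `i` and `j` are d-separated given `S` in `G`. -/
def DSep (G : DAG p) (i j : Fin p) (S : Finset (Fin p)) : Prop := ¬ G.DConn i j S

end DAG

/-- A conditional independence (CI) relation `i ⊥ j | S` on `[p]`. -/
abbrev CIRel (p : ℕ) := Fin p × Fin p × Finset (Fin p)

/-- The set of CI relations encoded by the d-separations of `G`. -/
def CIof (G : DAG p) : Set (CIRel p) :=
  {t | t.1 ≠ t.2.1 ∧ t.1 ∉ t.2.2 ∧ t.2.1 ∉ t.2.2 ∧ G.DSep t.1 t.2.1 t.2.2}

/-- The symmetric closure of a set of CI relations. -/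
def symClosure (C : Set (CIRel p)) : Set (CIRel p) :=
  {t | t ∈ C ∨ (t.2.1, t.1, t.2.2) ∈ C}

/-- Symmetry of a set of CI relations. -/
def SymmetricCI (C : Set (CIRel p)) : Prop :=
  ∀ i j S, (i, j, S) ∈ C → (j, i, S) ∈ C

/-- A semigraphoid: symmetric and satisfying (SG2). -/
def Semigraphoid (C : Set (CIRel p)) : Prop :=
  SymmetricCI C ∧
  ∀ i j k S, (i, j, S) ∈ C → (i, k, insert j S) ∈ C →
    (i, k, S) ∈ C ∧ (i, j, insert k S) ∈ C

/-- A graphoid: a semigraphoid additionally satisfying intersection (INT). -/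
def Graphoid (C : Set (CIRel p)) : Prop :=
  Semigraphoid C ∧
  ∀ i j k S, (i, j, insert k S) ∈ C → (i, k, insert j S) ∈ C →
    (i, j, S) ∈ C ∧ (i, k, S) ∈ C

/-- Build a DAG from a relation compatible with a numeric ordering. -/
noncomputable def mkDAG (R : Fin p → Fin p → Prop) (f : Fin p → ℕ)
    (hf : ∀ a b, R a b → f a < f b) : DAG p where
  arrows := Finset.univ.filter fun e : Fin p × Fin p => R e.1 e.2
  acyclic := by
    intro i hi
    have key : ∀ a b : Fin p,
        Relation.TransGen (fun a b : Fin p =>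
          (a, b) ∈ Finset.univ.filter fun e : Fin p × Fin p => R e.1 e.2) a b →
        f a < f b := by
      intro a b h
      induction h with
      | single h => exact hf _ _ (by simpa using h)
      | tail _ h ih => exact lt_trans ih (hf _ _ (by simpa using h))
    exact lt_irrefl _ (key i i hi)

/-- The conditioning set `{π_1, …, π_j} \ {π_i, π_j}` (where `b = π_j` is the
later node and `a = π_i` the earlier one) used in the definition of minimal
I-MAPs. -/
noncomputable def condSet (π : Equiv.Perm (Fin p)) (a b : Fin p) : Finset (Fin p) :=
  ((Finset.univ.filter fun k : Fin p => π.symm k ≤ π.symm b).erase a).erase b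

/-- The minimal I-MAP `G_π` of a set `C` of CI relations with respect to the
permutation (ordering) `π`: there is an arrow `π_i → π_j` for positions `i < j`
iff `π_i ⊥ π_j | {π_1, …, π_j} \ {π_i, π_j}` is not in `C`. -/
noncomputable def minimalIMAP (C : Set (CIRel p)) (π : Equiv.Perm (Fin p)) : DAG p :=
  mkDAG (fun a b => π.symm a < π.symm b ∧ (a, b, condSet π a b) ∉ C)
    (fun a => (π.symm a : ℕ)) (fun a b h => by exact_mod_cast h.1)

/-- Markov equivalence of DAGs: equal sets of d-separation statements. -/
def MarkovEquiv (G H : DAG p) : Prop := CIof G = CIof H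

/-- `H` is an independence map of `G`, written `G ≤ H`: `CI(H) ⊆ CI(G)`. -/
def IMapLE (G H : DAG p) : Prop := CIof H ⊆ CIof G

/-- `π` is a linear extension of `G`: every arrow goes from an earlier to a
later element of `π`. -/
def IsLinExt (G : DAG p) (π : Equiv.Perm (Fin p)) : Prop :=
  ∀ a b, G.Arrow a b → π.symm a < π.symm b

/-- `a → b` is a covered arrow of `G`: `pa(a) = pa(b) \ {a}`. -/
def DAG.Covered (G : DAG p) (a b : Fin p) : Prop :=
  G.Arrow a b ∧ G.parents a = (G.parents b).erase a

/-- The minimal I-MAPs `G_σ` and `G_ρ` are connected by a covered arrow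
reversal: `ρ` is a linear extension of the DAG obtained from `G_σ` by
reversing one covered arrow of `G_σ`. -/
def CoveredReversalStep (C : Set (CIRel p)) (σ ρ : Equiv.Perm (Fin p)) : Prop :=
  ∃ a b : Fin p, (minimalIMAP C σ).Covered a b ∧
    ρ.symm b < ρ.symm a ∧
    ∀ x y : Fin p, (minimalIMAP C σ).Arrow x y → (x, y) ≠ (a, b) →
      ρ.symm x < ρ.symm y

/-- A weakly decreasing sequence of covered arrow reversals: a sequence of
minimal I-MAPs in which consecutive members are connected by covered arrow
reversals and the number of arrows never increases. -/
def WeaklyDecreasingSeq (C : Set (CIRel p)) (s : List (Equiv.Perm (Fin p))) : Prop :=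
  s.Chain' fun σ ρ => CoveredReversalStep C σ ρ ∧
    (minimalIMAP C ρ).numArrows ≤ (minimalIMAP C σ).numArrows

/-- Some weakly decreasing sequence of covered arrow reversals starting at
`G_π` reaches a minimal I-MAP with strictly fewer arrows. -/
def EscapesByCoveredReversals (C : Set (CIRel p)) (π : Equiv.Perm (Fin p)) : Prop :=
  ∃ (s : List (Equiv.Perm (Fin p))) (τ : Equiv.Perm (Fin p)),
    s.head? = some π ∧ s.getLast? = some τ ∧ WeaklyDecreasingSeq C s ∧
    (minimalIMAP C τ).numArrows < (minimalIMAP C π).numArrows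

/-- The TSP assumption of `C` with respect to `G`. -/
def TSP (C : Set (CIRel p)) (G : DAG p) : Prop :=
  CIof G ⊆ C ∧
  ∀ π : Equiv.Perm (Fin p), ¬ EscapesByCoveredReversals C π →
    MarkovEquiv (minimalIMAP C π) G

/-- The SMR assumption of `C` with respect to `G`. -/
def SMR (C : Set (CIRel p)) (G : DAG p) : Prop :=
  CIof G ⊆ C ∧
  ∀ H : DAG p, CIof H ⊆ C → ¬ MarkovEquiv H G → G.numArrows < H.numArrows

end GSP

namespace GSP

variable {p : ℕ} {C : Set (CIRel p)}

variable {p : ℕ} {C : Set (CIRel p)}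

lemma mem_minimalIMAP {π : Equiv.Perm (Fin p)} {x y : Fin p} :
    (x, y) ∈ (minimalIMAP C π).arrows ↔
      π.symm x < π.symm y ∧ (x, y, condSet π x y) ∉ C := by
  simp [minimalIMAP, mkDAG]

lemma mem_condSet {π : Equiv.Perm (Fin p)} {x y k : Fin p} :
    k ∈ condSet π x y ↔ π.symm k ≤ π.symm y ∧ k ≠ x ∧ k ≠ y := by
  simp [condSet]; tauto

lemma symm_mul_swap (π : Equiv.Perm (Fin p)) (jf jf1 : Fin p) (x : Fin p) :
    (π * Equiv.swap jf jf1).symm x = Equiv.swap jf jf1 (π.symm x) := rfl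

lemma swap_lt_swap {jf jf1 : Fin p} (hj : (jf1 : ℕ) = (jf : ℕ) + 1)
    {i k : Fin p} (hik : i < k) (hne : ¬(i = jf ∧ k = jf1)) :
    Equiv.swap jf jf1 i < Equiv.swap jf jf1 k := by
  rw [Equiv.swap_apply_def, Equiv.swap_apply_def]
  simp only [Fin.ext_iff, Fin.lt_def, not_and] at *
  split_ifs <;> (try simp only [Fin.ext_iff, Fin.lt_def] at *) <;> omega

lemma swap_lt_iff {jf jf1 : Fin p} (hj : (jf1 : ℕ) = (jf : ℕ) + 1)
    {i k : Fin p} (h : (i ≠ jf ∧ i ≠ jf1) ∨ (k ≠ jf ∧ k ≠ jf1)) :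
    (Equiv.swap jf jf1 i < Equiv.swap jf jf1 k ↔ i < k) := by
  rw [Equiv.swap_apply_def, Equiv.swap_apply_def]
  simp only [Fin.ext_iff, Fin.lt_def, ne_eq] at *
  split_ifs <;> (try simp only [Fin.ext_iff, Fin.lt_def] at *) <;> omega


variable {p : ℕ} {C : Set (CIRel p)}

lemma eq_iff_pos {π : Equiv.Perm (Fin p)} {k z : Fin p} :
    k = z ↔ ((π.symm k : ℕ) = (π.symm z : ℕ)) := by
  rw [Fin.val_eq_val, Equiv.apply_eq_iff_eq]

lemma mem_condSet_nat {π : Equiv.Perm (Fin p)} {x y k : Fin p} :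
    k ∈ condSet π x y ↔ ((π.symm k : ℕ) ≤ (π.symm y : ℕ) ∧
      (π.symm k : ℕ) ≠ (π.symm x : ℕ) ∧ (π.symm k : ℕ) ≠ (π.symm y : ℕ)) := by
  rw [mem_condSet, Fin.le_def, ne_eq, ne_eq, eq_iff_pos (π := π) (k := k) (z := x),
    eq_iff_pos (π := π) (k := k) (z := y)]


lemma pos_mul_swap {π : Equiv.Perm (Fin p)} {jf jf1 : Fin p} (hj : (jf1:ℕ) = (jf:ℕ) + 1) (k : Fin p) :
    (((π * Equiv.swap jf jf1).symm k : ℕ)) =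
      if (π.symm k : ℕ) = (jf:ℕ) then (jf:ℕ)+1 else if (π.symm k : ℕ) = (jf:ℕ)+1 then (jf:ℕ) else (π.symm k : ℕ) := by
  rw [symm_mul_swap, Equiv.swap_apply_def]
  split_ifs <;> simp only [Fin.ext_iff] at * <;> omega


variable {p : ℕ} {C : Set (CIRel p)}

lemma swapLemma (hC : Graphoid C) (π : Equiv.Perm (Fin p)) (jf jf1 : Fin p)
    (hj : (jf1 : ℕ) = (jf : ℕ) + 1)
    (huv : (π jf, π jf1, condSet π (π jf) (π jf1)) ∈ C) :
    (minimalIMAP C (π * Equiv.swap jf jf1)).arrows = (minimalIMAP C π).arrows := by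
  obtain ⟨⟨hsym, hSG2⟩, hINT⟩ := hC
  have key : ∀ x : Fin p, (π.symm x : ℕ) < (jf : ℕ) →
      (((x, π jf, condSet π x (π jf)) ∈ C ↔
        (x, π jf, condSet (π * Equiv.swap jf jf1) x (π jf)) ∈ C)
      ∧ ((x, π jf1, condSet π x (π jf1)) ∈ C ↔
        (x, π jf1, condSet (π * Equiv.swap jf jf1) x (π jf1)) ∈ C)) := by
    intro x hx
    have hQ1 : condSet π (π jf) (π jf1) = insert x (condSet π x (π jf)) := by
      ext k
      simp only [Finset.mem_insert, mem_condSet_nat, Equiv.symm_apply_apply,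
        eq_iff_pos (π := π) (k := k) (z := x)]
      omega
    have hA : condSet (π * Equiv.swap jf jf1) x (π jf)
        = insert (π jf1) (condSet π x (π jf)) := by
      ext k
      simp only [Finset.mem_insert, mem_condSet_nat, Equiv.symm_apply_apply,
        eq_iff_pos (π := π) (k := k) (z := π jf1), pos_mul_swap hj]
      split_ifs <;> omega
    have hB : condSet π x (π jf1)
        = insert (π jf) (condSet (π * Equiv.swap jf jf1) x (π jf1)) := by
      ext k
      simp only [Finset.mem_insert, mem_condSet_nat, Equiv.symm_apply_apply,
        eq_iff_pos (π := π) (k := k) (z := π jf), pos_mul_swap hj]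
      split_ifs <;> omega
    have hQ2 : condSet π (π jf) (π jf1)
        = insert x (condSet (π * Equiv.swap jf jf1) x (π jf1)) := by
      ext k
      simp only [Finset.mem_insert, mem_condSet_nat, Equiv.symm_apply_apply,
        eq_iff_pos (π := π) (k := k) (z := x), pos_mul_swap hj]
      split_ifs <;> omega
    refine ⟨⟨fun h => ?_, fun h => ?_⟩, ⟨fun h => ?_, fun h => ?_⟩⟩
    · have h1 := hsym _ _ _ h
      have h2 : (π jf, π jf1, insert x (condSet π x (π jf))) ∈ C := by
        rw [← hQ1]; exact huv
      have h3 := (hSG2 (π jf) x (π jf1) _ h1 h2).2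
      rw [hA]; exact hsym _ _ _ h3
    · rw [hA] at h
      have h1 := hsym _ _ _ h
      have h2 : (π jf, π jf1, insert x (condSet π x (π jf))) ∈ C := by
        rw [← hQ1]; exact huv
      exact hsym _ _ _ (hINT (π jf) x (π jf1) _ h1 h2).1
    · rw [hB] at h
      have h1 := hsym _ _ _ h
      have h2 : (π jf1, π jf, insert x (condSet (π * Equiv.swap jf jf1) x (π jf1))) ∈ C := by
        rw [← hQ2]; exact hsym _ _ _ huv
      exact hsym _ _ _ (hINT (π jf1) x (π jf) _ h1 h2).1
    · have h1 := hsym _ _ _ h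
      have h2 : (π jf1, π jf, insert x (condSet (π * Equiv.swap jf jf1) x (π jf1))) ∈ C := by
        rw [← hQ2]; exact hsym _ _ _ huv
      have h3 := (hSG2 (π jf1) x (π jf) _ h1 h2).2
      rw [hB]; exact hsym _ _ _ h3
  have hord_iff : ∀ x y : Fin p, ¬(x = π jf ∧ y = π jf1) → ¬(x = π jf1 ∧ y = π jf) →
      (((π * Equiv.swap jf jf1).symm x : ℕ) < ((π * Equiv.swap jf jf1).symm y : ℕ)
        ↔ (π.symm x : ℕ) < (π.symm y : ℕ)) := by
    intro x y h1 h2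
    rw [eq_iff_pos (π := π) (k := x) (z := π jf), eq_iff_pos (π := π) (k := y) (z := π jf1)] at h1
    rw [eq_iff_pos (π := π) (k := x) (z := π jf1), eq_iff_pos (π := π) (k := y) (z := π jf)] at h2
    simp only [Equiv.symm_apply_apply] at h1 h2
    rw [pos_mul_swap hj, pos_mul_swap hj]
    split_ifs <;> omega
  ext e
  obtain ⟨x, y⟩ := e
  rw [mem_minimalIMAP, mem_minimalIMAP, Fin.lt_def, Fin.lt_def]
  by_cases hyu : y = π jf
  · subst hyu
    by_cases hxv : x = π jf1
    · subst hxv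
      constructor
      · rintro ⟨-, hnC⟩
        exfalso; apply hnC
        have hE : condSet (π * Equiv.swap jf jf1) (π jf1) (π jf)
            = condSet π (π jf) (π jf1) := by
          ext k
          simp only [mem_condSet_nat, Equiv.symm_apply_apply, pos_mul_swap hj]
          split_ifs <;> omega
        rw [hE]; exact hsym _ _ _ huv
      · rintro ⟨hord, -⟩
        exfalso
        simp only [Equiv.symm_apply_apply] at hord
        omega
    · by_cases hxu : x = π jf
      · subst hxu
        constructor <;> rintro ⟨hord, -⟩ <;> exact absurd hord (lt_irrefl _)
      · have hx1 : (π.symm x : ℕ) ≠ (jf : ℕ) := by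
          intro h; exact hxu (by rw [eq_iff_pos (π := π)]; simpa using h)
        have hx2 : (π.symm x : ℕ) ≠ (jf : ℕ) + 1 := by
          intro h; exact hxv (by rw [eq_iff_pos (π := π)]; simpa [hj] using h)
        have ho := hord_iff x (π jf) (by rintro ⟨h, -⟩; exact hxu h)
          (by rintro ⟨h, -⟩; exact hxv h)
        by_cases hlt : (π.symm x : ℕ) < (jf : ℕ)
        · have hk := (key x hlt).1
          rw [ho]
          constructor <;> rintro ⟨hord, hnC⟩
          · exact ⟨hord, fun hc => hnC (hk.mp hc)⟩
          · exact ⟨hord, fun hc => hnC (hk.mpr hc)⟩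
        · constructor <;> rintro ⟨hord, -⟩ <;> exfalso
          · rw [ho] at hord
            simp only [Equiv.symm_apply_apply] at hord
            omega
          · simp only [Equiv.symm_apply_apply] at hord
            omega
  · by_cases hyv : y = π jf1
    · subst hyv
      by_cases hxu : x = π jf
      · subst hxu
        constructor
        · rintro ⟨hord, -⟩
          exfalso
          have h1 : ((π * Equiv.swap jf jf1).symm (π jf) : ℕ) = (jf : ℕ) + 1 := by
            rw [pos_mul_swap hj]; simp
          have h2 : ((π * Equiv.swap jf jf1).symm (π jf1) : ℕ) = (jf : ℕ) := by
            rw [pos_mul_swap hj]; simp only [Equiv.symm_apply_apply]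
            split_ifs <;> omega
          omega
        · rintro ⟨-, hnC⟩
          exact absurd huv hnC
      · by_cases hxv : x = π jf1
        · subst hxv
          constructor <;> rintro ⟨hord, -⟩ <;> exact absurd hord (lt_irrefl _)
        · have hx1 : (π.symm x : ℕ) ≠ (jf : ℕ) := by
            intro h; exact hxu (by rw [eq_iff_pos (π := π)]; simpa using h)
          have hx2 : (π.symm x : ℕ) ≠ (jf : ℕ) + 1 := by
            intro h; exact hxv (by rw [eq_iff_pos (π := π)]; simpa [hj] using h)
          have ho := hord_iff x (π jf1) (by rintro ⟨h, -⟩; exact hxu h)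
            (by rintro ⟨h, -⟩; exact hxv h)
          by_cases hlt : (π.symm x : ℕ) < (jf : ℕ)
          · have hk := (key x hlt).2
            rw [ho]
            constructor <;> rintro ⟨hord, hnC⟩
            · exact ⟨hord, fun hc => hnC (hk.mp hc)⟩
            · exact ⟨hord, fun hc => hnC (hk.mpr hc)⟩
          · constructor <;> rintro ⟨hord, -⟩ <;> exfalso
            · rw [ho] at hord
              simp only [Equiv.symm_apply_apply] at hord
              omega
            · simp only [Equiv.symm_apply_apply] at hord
              omega
    · have hy1 : (π.symm y : ℕ) ≠ (jf : ℕ) := by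
        intro h; exact hyu (by rw [eq_iff_pos (π := π)]; simpa using h)
      have hy2 : (π.symm y : ℕ) ≠ (jf : ℕ) + 1 := by
        intro h; exact hyv (by rw [eq_iff_pos (π := π)]; simpa [hj] using h)
      have hcond : condSet (π * Equiv.swap jf jf1) x y = condSet π x y := by
        ext k
        simp only [mem_condSet_nat, pos_mul_swap hj]
        split_ifs <;> omega
      have ho := hord_iff x y (by rintro ⟨-, h⟩; exact hyv h)
        (by rintro ⟨-, h⟩; exact hyu h)
      rw [hcond, ho]


variable {p : ℕ} {C : Set (CIRel p)}

/-- Inversions of `π` relative to `π₁`. -/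
noncomputable def invSet (π₁ π : Equiv.Perm (Fin p)) : Finset (Fin p × Fin p) :=
  Finset.univ.filter fun e => π₁.symm e.1 < π₁.symm e.2 ∧ π.symm e.2 < π.symm e.1

lemma invSet_empty_eq (π₁ π : Equiv.Perm (Fin p)) (h : invSet π₁ π = ∅) :
    (minimalIMAP C π).arrows = (minimalIMAP C π₁).arrows := by
  have hno : ∀ x y : Fin p, ¬(π₁.symm x < π₁.symm y ∧ π.symm y < π.symm x) := by
    intro x y hxy
    have : (x, y) ∈ invSet π₁ π := by
      simp only [invSet, Finset.mem_filter, Finset.mem_univ, true_and]; exact hxy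
    rw [h] at this; exact absurd this (Finset.notMem_empty _)
  have horder : ∀ x y : Fin p, (π₁.symm x < π₁.symm y ↔ π.symm x < π.symm y) := by
    intro x y
    constructor
    · intro hxy
      rcases lt_trichotomy (π.symm x) (π.symm y) with h' | h' | h'
      · exact h'
      · exact absurd (π.symm.injective h') (by intro he; subst he; exact lt_irrefl _ hxy)
      · exact absurd ⟨hxy, h'⟩ (hno x y)
    · intro hxy
      rcases lt_trichotomy (π₁.symm x) (π₁.symm y) with h' | h' | h'
      · exact h'
      · exact absurd (π₁.symm.injective h') (by intro he; subst he; exact lt_irrefl _ hxy)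
      · exact absurd ⟨h', hxy⟩ (hno y x)
  have hcond : ∀ x y : Fin p, condSet π x y = condSet π₁ x y := by
    intro x y; ext k
    rw [mem_condSet, mem_condSet]
    have e1 : π.symm k ≤ π.symm y ↔ (π.symm k < π.symm y ∨ k = y) := by
      rw [le_iff_lt_or_eq, Equiv.apply_eq_iff_eq]
    have e2 : π₁.symm k ≤ π₁.symm y ↔ (π₁.symm k < π₁.symm y ∨ k = y) := by
      rw [le_iff_lt_or_eq, Equiv.apply_eq_iff_eq]
    rw [e1, e2, horder k y]
  ext e
  obtain ⟨x, y⟩ := e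
  rw [mem_minimalIMAP, mem_minimalIMAP, hcond x y, horder x y]

lemma exists_consec_inversion (π₁ π : Equiv.Perm (Fin p)) (h : (invSet π₁ π).Nonempty) :
    ∃ jf jf1 : Fin p, (jf1 : ℕ) = (jf : ℕ) + 1 ∧
      (π₁.symm (π jf1) : ℕ) < (π₁.symm (π jf) : ℕ) := by
  by_contra hcon
  push_neg at hcon
  have step : ∀ i : ℕ, (h2 : i + 1 < p) →
      (π₁.symm (π ⟨i, by omega⟩) : ℕ) < (π₁.symm (π ⟨i + 1, h2⟩) : ℕ) := by
    intro i h2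
    have hle := hcon ⟨i, by omega⟩ ⟨i + 1, h2⟩ rfl
    have hne : (π₁.symm (π ⟨i + 1, h2⟩) : ℕ) ≠ (π₁.symm (π ⟨i, by omega⟩) : ℕ) := by
      intro he
      have := π.injective (π₁.symm.injective (Fin.ext he))
      simp only [Fin.mk.injEq] at this
      omega
    omega
  have mono : ∀ d i : ℕ, (hi : i + d < p) → d ≠ 0 →
      (π₁.symm (π ⟨i, by omega⟩) : ℕ) < (π₁.symm (π ⟨i + d, hi⟩) : ℕ) := by
    intro d
    induction d with
    | zero => intro i hi h0; omega
    | succ d ihd =>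
      intro i hi h0
      rcases Nat.eq_zero_or_pos d with hd | hd
      · subst hd; exact step i hi
      · have h1 := ihd i (by omega) (by omega)
        have h2 := step (i + d) (by omega)
        have e3 : (⟨i + (d + 1), hi⟩ : Fin p) = (⟨i + d + 1, by omega⟩ : Fin p) := rfl
        rw [e3]
        omega
  obtain ⟨⟨x, y⟩, hxy⟩ := h
  simp only [invSet, Finset.mem_filter, Finset.mem_univ, true_and] at hxy
  obtain ⟨hxy1, hxy2⟩ := hxy
  have hik : (π.symm y : ℕ) < (π.symm x : ℕ) := hxy2
  have hm := mono ((π.symm x : ℕ) - (π.symm y : ℕ)) (π.symm y : ℕ) (by omega) (by omega)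
  have e1 : (⟨(π.symm y : ℕ), by omega⟩ : Fin p) = π.symm y := by apply Fin.ext; rfl
  have e2 : (⟨(π.symm y : ℕ) + ((π.symm x : ℕ) - (π.symm y : ℕ)), by omega⟩ : Fin p)
      = π.symm x := by apply Fin.ext; simp; omega
  rw [e1, e2, Equiv.apply_symm_apply, Equiv.apply_symm_apply] at hm
  have : (π₁.symm x : ℕ) < (π₁.symm y : ℕ) := hxy1
  omega

lemma invSet_mul_swap (π₁ π : Equiv.Perm (Fin p)) {jf jf1 : Fin p}
    (hj : (jf1 : ℕ) = (jf : ℕ) + 1)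
    (hinv : (π₁.symm (π jf1) : ℕ) < (π₁.symm (π jf) : ℕ)) :
    invSet π₁ (π * Equiv.swap jf jf1) = (invSet π₁ π).erase (π jf1, π jf) := by
  ext e
  obtain ⟨x, y⟩ := e
  by_cases hxeq : x = π jf
  · subst hxeq
    by_cases hyeq : y = π jf1
    · subst hyeq
      simp only [invSet, Finset.mem_erase, Finset.mem_filter, Finset.mem_univ, true_and,
        Prod.mk.injEq, Fin.lt_def, ne_eq, not_and, pos_mul_swap hj,
        eq_iff_pos (π := π) (k := (π jf)) (z := π jf1),
        eq_iff_pos (π := π) (k := (π jf1)) (z := π jf),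
        Equiv.symm_apply_apply]
      split_ifs <;> omega
    · have hy : (π.symm y : ℕ) ≠ (jf : ℕ) + 1 := fun h =>
        hyeq (by rw [eq_iff_pos (π := π)]; simpa [hj] using h)
      simp only [invSet, Finset.mem_erase, Finset.mem_filter, Finset.mem_univ, true_and,
        Prod.mk.injEq, Fin.lt_def, ne_eq, not_and, pos_mul_swap hj,
        eq_iff_pos (π := π) (k := (π jf)) (z := π jf1),
        eq_iff_pos (π := π) (k := y) (z := π jf),
        Equiv.symm_apply_apply]
      split_ifs <;> omega
  · have hx : (π.symm x : ℕ) ≠ (jf : ℕ) := fun h =>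
      hxeq (by rw [eq_iff_pos (π := π)]; simpa using h)
    simp only [invSet, Finset.mem_erase, Finset.mem_filter, Finset.mem_univ, true_and,
      Prod.mk.injEq, Fin.lt_def, ne_eq, not_and, pos_mul_swap hj,
      eq_iff_pos (π := π) (k := x) (z := π jf1),
      eq_iff_pos (π := π) (k := y) (z := π jf),
      Equiv.symm_apply_apply]
    split_ifs <;> omega

lemma lemmaM (hC : Graphoid C) (H : DAG p) (π₁ : Equiv.Perm (Fin p))
    (hsub : (minimalIMAP C π₁).arrows ⊆ H.arrows) (h1 : IsLinExt H π₁) :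
    ∀ n (π : Equiv.Perm (Fin p)), (invSet π₁ π).card ≤ n → IsLinExt H π →
      (minimalIMAP C π).arrows = (minimalIMAP C π₁).arrows := by
  intro n
  induction n with
  | zero =>
    intro π hcard hlin
    exact invSet_empty_eq π₁ π (Finset.card_eq_zero.mp (Nat.le_zero.mp hcard))
  | succ n ih =>
    intro π hcard hlin
    rcases Nat.eq_zero_or_pos (invSet π₁ π).card with h0 | h0
    · exact invSet_empty_eq π₁ π (Finset.card_eq_zero.mp h0)
    · obtain ⟨jf, jf1, hj, hinv⟩ := exists_consec_inversion π₁ π (Finset.card_pos.mp h0)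
      have hmem : (π jf1, π jf) ∈ invSet π₁ π := by
        simp only [invSet, Finset.mem_filter, Finset.mem_univ, true_and]
        refine ⟨Fin.lt_def.mpr hinv, ?_⟩
        simp only [Equiv.symm_apply_apply, Fin.lt_def]
        omega
      have hstep := invSet_mul_swap π₁ π hj hinv
      have hcard' : (invSet π₁ (π * Equiv.swap jf jf1)).card ≤ n := by
        rw [hstep, Finset.card_erase_of_mem hmem]; omega
      have hlin' : IsLinExt H (π * Equiv.swap jf jf1) := by
        intro s t hst
        rw [symm_mul_swap, symm_mul_swap]
        refine swap_lt_swap hj (hlin s t hst) ?_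
        rintro ⟨hs, ht⟩
        have hs' : s = π jf := by rw [← Equiv.apply_symm_apply π s, hs]
        have ht' : t = π jf1 := by rw [← Equiv.apply_symm_apply π t, ht]
        subst hs'; subst ht'
        have := h1 _ _ hst
        rw [Fin.lt_def] at this
        omega
      have hres := ih (π * Equiv.swap jf jf1) hcard' hlin'
      have e1 : (π * Equiv.swap jf jf1) jf = π jf1 := by
        simp [Equiv.Perm.mul_apply]
      have e2 : (π * Equiv.swap jf jf1) jf1 = π jf := by
        simp [Equiv.Perm.mul_apply]
      have hHarrow : (π jf1, π jf) ∉ H.arrows := by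
        intro hmem'
        have := hlin _ _ hmem'
        rw [Fin.lt_def] at this
        simp only [Equiv.symm_apply_apply] at this
        omega
      have hnotarrow : (π jf1, π jf) ∉ (minimalIMAP C (π * Equiv.swap jf jf1)).arrows := by
        rw [hres]; intro hmem'; exact hHarrow (hsub hmem')
      rw [mem_minimalIMAP] at hnotarrow
      push_neg at hnotarrow
      have hordvu : (π * Equiv.swap jf jf1).symm (π jf1) < (π * Equiv.swap jf jf1).symm (π jf) := by
        rw [Fin.lt_def, pos_mul_swap hj, pos_mul_swap hj]
        simp only [Equiv.symm_apply_apply]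
        split_ifs <;> omega
      have hrel' := hnotarrow hordvu
      have hswap := swapLemma hC (π * Equiv.swap jf jf1) jf jf1 hj (by rw [e1, e2]; exact hrel')
      rw [mul_assoc, Equiv.swap_mul_self, mul_one] at hswap
      rw [hswap]
      exact hres


variable {p : ℕ} {C : Set (CIRel p)}

lemma mem_parents {G : DAG p} {x y : Fin p} : x ∈ G.parents y ↔ (x, y) ∈ G.arrows := by
  exact ⟨fun h => (Finset.mem_filter.mp h).2, fun h => Finset.mem_filter.mpr ⟨Finset.mem_univ _, h⟩⟩

noncomputable def cycFun {p : ℕ} (pb pa : ℕ) (hba : pb < pa) (h : pa < p) (k : Fin p) :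
    Fin p :=
  if h1 : (k : ℕ) = pa then ⟨pb, by omega⟩ else
  if h2 : pb ≤ (k : ℕ) ∧ (k : ℕ) < pa then ⟨(k : ℕ) + 1, by omega⟩ else k

lemma cycFun_val {p pb pa : ℕ} (hba : pb < pa) (h : pa < p) (k : Fin p) :
    ((cycFun pb pa hba h k : Fin p) : ℕ) =
      if (k : ℕ) = pa then pb else
      if pb ≤ (k : ℕ) ∧ (k : ℕ) < pa then (k : ℕ) + 1 else (k : ℕ) := by
  unfold cycFun
  split_ifs <;> rfl

/-- The cycle sending position `pa` to `pb` and shifting `[pb, pa)` up by one. -/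
noncomputable def cyc {p : ℕ} (pb pa : ℕ) (hba : pb < pa) (h : pa < p) :
    Equiv.Perm (Fin p) :=
  Equiv.ofBijective (cycFun pb pa hba h) (by
    rw [Finite.injective_iff_bijective.symm]
    intro k1 k2 he
    have hval := congrArg Fin.val he
    rw [cycFun_val, cycFun_val] at hval
    apply Fin.ext
    split_ifs at hval <;> omega)

lemma cyc_val {p pb pa : ℕ} (hba : pb < pa) (h : pa < p) (k : Fin p) :
    ((cyc pb pa hba h k : Fin p) : ℕ) =
      if (k : ℕ) = pa then pb else
      if pb ≤ (k : ℕ) ∧ (k : ℕ) < pa then (k : ℕ) + 1 else (k : ℕ) := by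
  rw [cyc, Equiv.ofBijective_apply, cycFun_val]

lemma flipLinExt (τ : Equiv.Perm (Fin p)) (G : DAG p) (a b : Fin p)
    (hG : G.arrows = insert (b, a) ((minimalIMAP C τ).arrows.erase (a, b)))
    (σ : Equiv.Perm (Fin p)) (jf jf1 : Fin p) (hj : (jf1 : ℕ) = (jf : ℕ) + 1)
    (hσa : σ.symm a = jf) (hσb : σ.symm b = jf1)
    (hσlin : IsLinExt (minimalIMAP C τ) σ) :
    IsLinExt G (σ * Equiv.swap jf jf1) := by
  intro x y hxy
  have hxy' : (x, y) ∈ G.arrows := hxy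
  rw [hG] at hxy'
  rw [symm_mul_swap, symm_mul_swap]
  rcases Finset.mem_insert.mp hxy' with h | h
  · obtain ⟨hx, hy⟩ := Prod.ext_iff.mp h
    subst hx; subst hy
    rw [hσa, hσb, Equiv.swap_apply_left, Equiv.swap_apply_right, Fin.lt_def]
    omega
  · obtain ⟨hne, hmem⟩ := Finset.mem_erase.mp h
    refine swap_lt_swap hj (hσlin x y hmem) ?_
    rintro ⟨hx, hy⟩
    apply hne
    have hxa : x = a := by
      rw [← hσa] at hx; exact σ.symm.injective hx
    have hyb : y = b := by
      rw [← hσb] at hy; exact σ.symm.injective hy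
    rw [hxa, hyb]


variable {p : ℕ} {C : Set (CIRel p)}

lemma flipSub (hC : Graphoid C) (τ : Equiv.Perm (Fin p)) (G : DAG p) (a b : Fin p)
    (hcov : (minimalIMAP C τ).Covered a b)
    (hG : G.arrows = insert (b, a) ((minimalIMAP C τ).arrows.erase (a, b)))
    (σ : Equiv.Perm (Fin p)) (jf jf1 : Fin p) (hj : (jf1 : ℕ) = (jf : ℕ) + 1)
    (hσa : σ.symm a = jf) (hσb : σ.symm b = jf1)
    (hσeq : (minimalIMAP C σ).arrows = (minimalIMAP C τ).arrows) :
    (minimalIMAP C (σ * Equiv.swap jf jf1)).arrows ⊆ G.arrows := by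
  obtain ⟨⟨hsym, hSG2⟩, hINT⟩ := hC
  have hja : (σ.symm a : ℕ) = (jf : ℕ) := by rw [hσa]
  have hjb : (σ.symm b : ℕ) = (jf : ℕ) + 1 := by rw [hσb, hj]
  have hab : a ≠ b := by intro hh; rw [hh] at hja; omega
  intro e he
  obtain ⟨x, y⟩ := e
  rw [mem_minimalIMAP] at he
  obtain ⟨hord, hnC⟩ := he
  rw [Fin.lt_def, pos_mul_swap hj, pos_mul_swap hj] at hord
  by_cases hy : y = a
  · have hy' := hy.symm; subst hy'
    by_cases hx : x = b
    · have hx' := hx.symm; subst hx'; rw [hG]; exact Finset.mem_insert_self _ _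
    · have hxb : (σ.symm x : ℕ) ≠ (jf : ℕ) + 1 := by
        intro hh; exact hx ((eq_iff_pos (π := σ)).mpr (by omega))
      by_cases hxa : x = a
      · have h' := hxa.symm; subst h'; exact absurd hord (lt_irrefl _)
      · have hxja : (σ.symm x : ℕ) ≠ (jf : ℕ) := by
          intro hh; exact hxa ((eq_iff_pos (π := σ)).mpr (by omega))
        have hxlt : (σ.symm x : ℕ) < (jf : ℕ) := by
          split_ifs at hord <;> omega
        have hxaArr : (x, a) ∈ (minimalIMAP C τ).arrows := by
          by_contra hcon
          have hxbn : (x, b) ∉ (minimalIMAP C τ).arrows := by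
            intro hmem
            apply hcon
            have h' : x ∈ ((minimalIMAP C τ).parents b).erase a :=
              Finset.mem_erase.mpr ⟨hxa, mem_parents.mpr hmem⟩
            rw [← hcov.2] at h'
            exact mem_parents.mp h'
          rw [← hσeq] at hcon hxbn
          rw [mem_minimalIMAP] at hcon hxbn
          push_neg at hcon hxbn
          have h1 : (x, a, condSet σ x a) ∈ C := hcon (Fin.lt_def.mpr (by omega))
          have h2 : (x, b, condSet σ x b) ∈ C := hxbn (Fin.lt_def.mpr (by omega))
          have hins : condSet σ x b = insert a (condSet σ x a) := by
            ext k
            simp only [Finset.mem_insert, mem_condSet_nat,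
              eq_iff_pos (π := σ) (k := k) (z := a)]
            omega
          rw [hins] at h2
          have h3 := (hSG2 x a b _ h1 h2).2
          apply hnC
          have hfin : condSet (σ * Equiv.swap jf jf1) x a
              = insert b (condSet σ x a) := by
            ext k
            simp only [Finset.mem_insert, mem_condSet_nat,
              eq_iff_pos (π := σ) (k := k) (z := b), pos_mul_swap hj]
            split_ifs <;> omega
          rw [hfin]; exact h3
        rw [hG]
        refine Finset.mem_insert_of_mem (Finset.mem_erase.mpr ⟨?_, hxaArr⟩)
        intro hh
        exact hab (Prod.ext_iff.mp hh).2
  · by_cases hy2 : y = b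
    · have hy2' := hy2.symm; subst hy2'
      by_cases hxa : x = a
      · have h' := hxa.symm; subst h'; exfalso; split_ifs at hord <;> omega
      · by_cases hxb : x = b
        · have h' := hxb.symm; subst h'; exact absurd hord (lt_irrefl _)
        · have hxja : (σ.symm x : ℕ) ≠ (jf : ℕ) := by
            intro hh; exact hxa ((eq_iff_pos (π := σ)).mpr (by omega))
          have hxjb : (σ.symm x : ℕ) ≠ (jf : ℕ) + 1 := by
            intro hh; exact hxb ((eq_iff_pos (π := σ)).mpr (by omega))
          have hxlt : (σ.symm x : ℕ) < (jf : ℕ) := by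
            split_ifs at hord <;> omega
          have hxbArr : (x, b) ∈ (minimalIMAP C τ).arrows := by
            by_contra hcon
            have hxan : (x, a) ∉ (minimalIMAP C τ).arrows := by
              intro hmem
              apply hcon
              have h' : x ∈ (minimalIMAP C τ).parents a := mem_parents.mpr hmem
              rw [hcov.2] at h'
              exact mem_parents.mp (Finset.mem_of_mem_erase h')
            rw [← hσeq] at hcon hxan
            rw [mem_minimalIMAP] at hcon hxan
            push_neg at hcon hxan
            have h1 : (x, a, condSet σ x a) ∈ C := hxan (Fin.lt_def.mpr (by omega))
            have h2 : (x, b, condSet σ x b) ∈ C := hcon (Fin.lt_def.mpr (by omega))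
            have hins : condSet σ x b = insert a (condSet σ x a) := by
              ext k
              simp only [Finset.mem_insert, mem_condSet_nat,
                eq_iff_pos (π := σ) (k := k) (z := a)]
              omega
            rw [hins] at h2
            have h3 := (hSG2 x a b _ h1 h2).1
            apply hnC
            have hfin : condSet (σ * Equiv.swap jf jf1) x b = condSet σ x a := by
              ext k
              simp only [mem_condSet_nat,
                eq_iff_pos (π := σ) (k := k) (z := a), pos_mul_swap hj]
              split_ifs <;> omega
            rw [hfin]; exact h3
          rw [hG]
          refine Finset.mem_insert_of_mem (Finset.mem_erase.mpr ⟨?_, hxbArr⟩)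
          intro hh
          exact hxa (Prod.ext_iff.mp hh).1
    · have hyja : (σ.symm y : ℕ) ≠ (jf : ℕ) := by
        intro hh; exact hy ((eq_iff_pos (π := σ)).mpr (by omega))
      have hyjb : (σ.symm y : ℕ) ≠ (jf : ℕ) + 1 := by
        intro hh; exact hy2 ((eq_iff_pos (π := σ)).mpr (by omega))
      have harr : (x, y) ∈ (minimalIMAP C σ).arrows := by
        rw [mem_minimalIMAP]
        refine ⟨Fin.lt_def.mpr ?_, fun hc => hnC ?_⟩
        · split_ifs at hord <;> omega
        · have hcond : condSet (σ * Equiv.swap jf jf1) x y = condSet σ x y := by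
            ext k
            simp only [mem_condSet_nat, pos_mul_swap hj]
            split_ifs <;> omega
          rw [hcond]; exact hc
      rw [hσeq] at harr
      rw [hG]
      refine Finset.mem_insert_of_mem (Finset.mem_erase.mpr ⟨?_, harr⟩)
      intro hh
      exact hy2 (Prod.ext_iff.mp hh).2



/-- Lemma 30, subDAG lemma: let `C` be a graphoid, `G_τ` a
minimal I-MAP w.r.t. `C`, and let `G` be a DAG that is Markov equivalent to
`G_τ` and obtained from `G_τ` by reversing a single covered arrow `a → b`.
Then for every linear extension `π` of `G`, the minimal I-MAP `G_π` is a
subDAG of `G`: every arrow of `G_π` is an arrow of `G`. -/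
theorem minimalIMAP_of_linext_is_subDAG
    (p : ℕ) (C : Set (CIRel p)) (hC : Graphoid C)
    (τ : Equiv.Perm (Fin p)) (G : DAG p) (a b : Fin p)
    (hcov : (minimalIMAP C τ).Covered a b)
    (hG : G.arrows = insert (b, a) ((minimalIMAP C τ).arrows.erase (a, b)))
    (hME : MarkovEquiv G (minimalIMAP C τ))
    (π : Equiv.Perm (Fin p)) (hlin : IsLinExt G π) :
    (minimalIMAP C π).arrows ⊆ G.arrows := by
  classical
  have hba_arrow : (b, a) ∈ G.arrows := by rw [hG]; exact Finset.mem_insert_self _ _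
  have hpba : (π.symm b : ℕ) < (π.symm a : ℕ) := by
    have := hlin b a hba_arrow; rwa [Fin.lt_def] at this
  have hpa_lt : (π.symm a : ℕ) < p := (π.symm a).isLt
  have hexists : ∃ (σ : Equiv.Perm (Fin p)) (jf jf1 : Fin p),
      (jf1 : ℕ) = (jf : ℕ) + 1 ∧ σ.symm a = jf ∧ σ.symm b = jf1 ∧
      IsLinExt (minimalIMAP C τ) σ := by
    refine ⟨π * (cyc (π.symm b : ℕ) (π.symm a : ℕ) hpba hpa_lt)⁻¹,
      ⟨(π.symm b : ℕ), by omega⟩, ⟨(π.symm b : ℕ) + 1, by omega⟩, rfl, ?_, ?_, ?_⟩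
    · apply Fin.ext
      have h0 : ((π * (cyc (π.symm b : ℕ) (π.symm a : ℕ) hpba hpa_lt)⁻¹).symm a : ℕ)
          = ((cyc (π.symm b : ℕ) (π.symm a : ℕ) hpba hpa_lt) (π.symm a) : ℕ) := rfl
      rw [h0, cyc_val, if_pos rfl]
    · apply Fin.ext
      have h0 : ((π * (cyc (π.symm b : ℕ) (π.symm a : ℕ) hpba hpa_lt)⁻¹).symm b : ℕ)
          = ((cyc (π.symm b : ℕ) (π.symm a : ℕ) hpba hpa_lt) (π.symm b) : ℕ) := rfl
      rw [h0, cyc_val, if_neg (by omega), if_pos (by omega)]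
    · intro x y hxy
      have hxy' : (x, y) ∈ (minimalIMAP C τ).arrows := hxy
      have h0 : ∀ z : Fin p,
          ((π * (cyc (π.symm b : ℕ) (π.symm a : ℕ) hpba hpa_lt)⁻¹).symm z : ℕ)
          = ((cyc (π.symm b : ℕ) (π.symm a : ℕ) hpba hpa_lt) (π.symm z) : ℕ) :=
        fun z => rfl
      rw [Fin.lt_def, h0 x, h0 y, cyc_val, cyc_val]
      by_cases hcase : (x, y) = (a, b)
      · rw [Prod.mk.injEq] at hcase
        obtain ⟨h1, h2⟩ := hcase
        rw [h1, h2, if_pos rfl, if_neg (by omega), if_pos (by omega)]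
        omega
      · have hmemG : (x, y) ∈ G.arrows := by
          rw [hG]; exact Finset.mem_insert_of_mem (Finset.mem_erase.mpr ⟨hcase, hxy'⟩)
        have hordπ : (π.symm x : ℕ) < (π.symm y : ℕ) := by
          have := hlin x y hmemG; rwa [Fin.lt_def] at this
        by_cases hya : (π.symm y : ℕ) = (π.symm a : ℕ)
        · have hyeq : y = a := (eq_iff_pos (π := π)).mpr hya
          rw [hyeq] at hxy'
          have hxpar : x ∈ (minimalIMAP C τ).parents a := mem_parents.mpr hxy'
          rw [hcov.2] at hxpar
          have hxa2 : x ≠ a := (Finset.mem_erase.mp hxpar).1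
          have hxbmem : (x, b) ∈ (minimalIMAP C τ).arrows :=
            mem_parents.mp (Finset.mem_of_mem_erase hxpar)
          have hxbG : (x, b) ∈ G.arrows := by
            rw [hG]
            refine Finset.mem_insert_of_mem (Finset.mem_erase.mpr ⟨?_, hxbmem⟩)
            intro hh; exact hxa2 (Prod.ext_iff.mp hh).1
          have hkey : (π.symm x : ℕ) < (π.symm b : ℕ) := by
            have := hlin x b hxbG; rwa [Fin.lt_def] at this
          split_ifs <;> omega
        · split_ifs <;> omega
  obtain ⟨σ, jf, jf1, hj, hσa, hσb, hσlin⟩ := hexists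
  have hτlin : IsLinExt (minimalIMAP C τ) τ := fun x y hxy => (mem_minimalIMAP.mp hxy).1
  have hσeq := lemmaM hC (minimalIMAP C τ) τ (Finset.Subset.refl _) hτlin
    (invSet τ σ).card σ (le_refl _) hσlin
  have hπstarlin := flipLinExt τ G a b hG σ jf jf1 hj hσa hσb hσlin
  have hπstarsub := flipSub hC τ G a b hcov hG σ jf jf1 hj hσa hσb hσeq
  have hfinal := lemmaM hC G (σ * Equiv.swap jf jf1) hπstarsub hπstarlin
    (invSet (σ * Equiv.swap jf jf1) π).card π (le_refl _) hlin
  rw [hfinal]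
  exact hπstarsub


end GSP
end

section
/- Lemma 31 (arrow deletions and minimal I-MAPs; content of the paper's lemma on Chickering sequences): Let C be a set of CI relations on [p], let H' be a DAG on [p] all of whose d-separation statements belong to C (CI(H') ⊆ C), and let H be the DAG obtained from H' by adding a single arrow x → y. Then for every linear extension π of H, the arrow x → y is not an arrow of the minimal I-MAP G_π with respect to C. -/
open scoped Classical

namespace GSP

/-- content of Lemma 31: let `C` be a set of CI relations,
`H'` a DAG with `CI(H') ⊆ C`, and let `H` be obtained from `H'` by adding a
single arrow `x → y`. Then for every linear extension `π` of `H`, the arrow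
`x → y` is not an arrow of the minimal I-MAP `G_π` w.r.t. `C`. -/
theorem added_arrow_not_in_minimalIMAP
    (p : ℕ) (C : Set (CIRel p)) (H' H : DAG p)
    (hH'C : CIof H' ⊆ C) (x y : Fin p)
    (hxy : (x, y) ∉ H'.arrows)
    (hH : H.arrows = insert (x, y) H'.arrows)
    (π : Equiv.Perm (Fin p)) (hlin : IsLinExt H π) :
    ¬ (minimalIMAP C π).Arrow x y := by
  intro harr
  have hmem : π.symm x < π.symm y ∧ (x, y, condSet π x y) ∉ C := by
    have h := harr
    simp only [minimalIMAP, mkDAG, DAG.Arrow, Finset.mem_filter, Finset.mem_univ,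
      true_and] at h
    exact h
  obtain ⟨hlt, hC⟩ := hmem
  set S := condSet π x y with hS
  have hSmem : ∀ k, k ∈ S ↔ k ≠ y ∧ k ≠ x ∧ π.symm k ≤ π.symm y := by
    intro k
    simp [hS, condSet, Finset.mem_erase, Finset.mem_filter]
  -- arrows of H' respect π
  have harr' : ∀ a b, H'.Arrow a b → π.symm a < π.symm b := by
    intro a b hab
    apply hlin
    show (a, b) ∈ H.arrows
    rw [hH]
    exact Finset.mem_insert_of_mem hab
  have hdesc : ∀ a d, H'.Desc a d → π.symm a ≤ π.symm d := by
    intro a d h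
    induction h with
    | refl => exact le_refl _
    | tail _ h ih => exact le_trans ih (le_of_lt (harr' _ _ h))
  have hxney : x ≠ y := fun h => by simp [h] at hlt
  apply hC
  apply hH'C
  refine ⟨hxney, ?_, ?_, ?_⟩
  · -- x ∉ S
    intro hx
    exact ((hSmem x).mp hx).2.1 rfl
  · intro hy
    exact ((hSmem y).mp hy).1 rfl
  · -- d-separation
    rintro ⟨l, hhead, hlast, hchain, hcond⟩
    have hne : l ≠ [] := by rintro rfl; simp at hhead
    have hlen : 0 < l.length := List.length_pos_iff.mpr hne
    have hget0 : l.get ⟨0, hlen⟩ = x := by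
      rw [List.head?_eq_head hne] at hhead
      rw [List.get_mk_zero hlen]
      exact Option.some_injective _ hhead
    have hgetlast : l.get ⟨l.length - 1, by omega⟩ = y := by
      rw [List.getLast?_eq_getLast hne] at hlast
      have := List.getLast_eq_getElem hne
      rw [this] at hlast
      exact (Option.some_injective _ hlast)
    have hadj : ∀ (i : ℕ) (h : i + 1 < l.length),
        H'.Adj (l.get ⟨i, by omega⟩) (l.get ⟨i + 1, h⟩) := by
      intro i h
      have := List.isChain_iff_getElem.mp hchain i (by omega)
      exact this
    -- Step 1: every node on the walk has position ≤ position of y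
    have hbound : ∀ i : Fin l.length, π.symm (l.get i) ≤ π.symm y := by
      by_contra hcon
      push_neg at hcon
      obtain ⟨i0, -, hmax⟩ := Finset.exists_max_image (Finset.univ : Finset (Fin l.length))
        (fun i => π.symm (l.get i)) ⟨⟨0, hlen⟩, Finset.mem_univ _⟩
      obtain ⟨j0, hj0⟩ := hcon
      have hbig : π.symm y < π.symm (l.get i0) :=
        lt_of_lt_of_le hj0 (hmax j0 (Finset.mem_univ _))
      have hi0ne0 : (i0 : ℕ) ≠ 0 := by
        intro h0
        have hx0 : l.get i0 = x := by
          rw [show i0 = ⟨0, hlen⟩ from Fin.ext h0]; exact hget0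
        rw [hx0] at hbig
        exact absurd (lt_trans hlt hbig) (lt_irrefl _)
      have hi0nelast : (i0 : ℕ) ≠ l.length - 1 := by
        intro h0
        have hy0 : l.get i0 = y := by
          rw [show i0 = ⟨l.length - 1, by omega⟩ from Fin.ext h0]; exact hgetlast
        rw [hy0] at hbig
        exact lt_irrefl _ hbig
      obtain ⟨j, hj⟩ : ∃ j, (i0 : ℕ) = j + 1 := ⟨(i0 : ℕ) - 1, by omega⟩
      have hilt := i0.isLt
      have hjlt : j + 1 < l.length := by omega
      have h2 : j + 1 + 1 < l.length := by omega
      have hi0eq : i0 = ⟨j + 1, hjlt⟩ := Fin.ext hj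
      rw [hi0eq] at hbig
      have hmax' : ∀ i : Fin l.length, π.symm (l.get i) ≤ π.symm (l.get ⟨j + 1, hjlt⟩) := by
        intro i
        rw [← hi0eq]
        exact hmax i (Finset.mem_univ _)
      have hprev : H'.Arrow (l.get ⟨j, by omega⟩) (l.get ⟨j + 1, hjlt⟩) := by
        rcases hadj j hjlt with h | h
        · exact h
        · exact absurd (lt_of_lt_of_le (harr' _ _ h) (hmax' ⟨j, by omega⟩)) (lt_irrefl _)
      have hnext : H'.Arrow (l.get ⟨j + 1 + 1, h2⟩) (l.get ⟨j + 1, hjlt⟩) := by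
        rcases hadj (j + 1) h2 with h | h
        · exact absurd (lt_of_lt_of_le (harr' _ _ h) (hmax' ⟨j + 1 + 1, h2⟩)) (lt_irrefl _)
        · exact h
      obtain ⟨d, hdS, hdd⟩ := (hcond (j + 1) (by omega) h2).1 ⟨hprev, hnext⟩
      have hd1 : π.symm (l.get ⟨j + 1, hjlt⟩) ≤ π.symm d := hdesc _ _ hdd
      have hd2 : π.symm d ≤ π.symm y := ((hSmem d).mp hdS).2.2
      exact absurd (lt_of_lt_of_le hbig (le_trans hd1 hd2)) (lt_irrefl _)
    -- Step 2: analyze the last edge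
    have hlen2 : 2 ≤ l.length := by
      by_contra h
      have hl1 : l.length = 1 := by omega
      have hxy' : l.get ⟨0, hlen⟩ = l.get ⟨l.length - 1, by omega⟩ := by
        congr 1
        exact Fin.ext (by omega)
      rw [hget0, hgetlast] at hxy'
      exact hxney hxy'
    obtain ⟨k, hk⟩ : ∃ k, l.length - 1 = k + 1 := ⟨l.length - 2, by omega⟩
    have hk1 : k + 1 < l.length := by omega
    have hkl : k < l.length := by omega
    have hgl : l.get ⟨k + 1, hk1⟩ = y := by
      have he : (⟨k + 1, hk1⟩ : Fin l.length) = ⟨l.length - 1, by omega⟩ :=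
        Fin.mk_eq_mk.mpr (by omega)
      rw [he]; exact hgetlast
    have hadjvy : H'.Adj (l.get ⟨k, hkl⟩) y := by
      have h := hadj k hk1
      rwa [hgl] at h
    have hvy : H'.Arrow (l.get ⟨k, hkl⟩) y := by
      rcases hadjvy with h | h
      · exact h
      · exact absurd (lt_of_lt_of_le (harr' _ _ h) (hbound ⟨k, hkl⟩)) (lt_irrefl _)
    have hvnex : l.get ⟨k, hkl⟩ ≠ x := by
      intro h
      rw [h] at hvy
      exact hxy hvy
    have hvney : l.get ⟨k, hkl⟩ ≠ y := by
      intro h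
      rw [h] at hvy
      exact H'.acyclic y (Relation.TransGen.single hvy)
    have hvS : l.get ⟨k, hkl⟩ ∈ S := (hSmem _).mpr ⟨hvney, hvnex, hbound _⟩
    have hk0 : 1 ≤ k := by
      by_contra h
      have hk00 : k = 0 := by omega
      apply hvnex
      rw [show (⟨k, hkl⟩ : Fin l.length) = ⟨0, hlen⟩ from Fin.mk_eq_mk.mpr hk00]
      exact hget0
    have hnotcol : ¬ H'.Collider (l.get ⟨k - 1, by omega⟩) (l.get ⟨k, by omega⟩)
        (l.get ⟨k + 1, hk1⟩) := by
      rintro ⟨-, h⟩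
      rw [hgl] at h
      exact H'.acyclic y (Relation.TransGen.tail (Relation.TransGen.single h) hvy)
    exact (hcond k hk0 hk1).2 hnotcol hvS

end GSP
end

section
/- D-separation along a linear extension (claim proved inside Lemma 31): Let G be a DAG on [p] and let π be a linear extension of G, written as a concatenation π = S x T y R, where x and y are single nodes and S, T, R are (possibly empty) sequences of nodes. If x and y are not adjacent in G, then x and y are d-separated given S ∪ T in G. -/
open scoped Classical

namespace GSP

variable {p : ℕ}

private lemma desc_mono (G : DAG p) (π : Equiv.Perm (Fin p)) (hlin : IsLinExt G π)
    {a b : Fin p} (h : G.Desc a b) : π.symm a ≤ π.symm b := by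
  induction h with
  | refl => exact le_rfl
  | tail _ h ih => exact le_of_lt (lt_of_le_of_lt ih (hlin _ _ h))

/-- claim proved inside Lemma 31: let `π` be a linear
extension of a DAG `G`, written `π = S x T y R` (so `x` occurs before `y`).
If `x` and `y` are not adjacent in `G`, then `x` and `y` are d-separated
given `S ∪ T`, which is the set of all nodes occurring strictly before `y`
in `π` other than `x`. -/
theorem dsep_of_nonadjacent_along_linear_extension
    (p : ℕ) (G : DAG p) (π : Equiv.Perm (Fin p)) (hlin : IsLinExt G π)
    (x y : Fin p) (hxy : π.symm x < π.symm y)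
    (hnadj : ¬ G.Adj x y) :
    G.DSep x y
      ((Finset.univ.filter fun a : Fin p => π.symm a < π.symm y).erase x) := by
  classical
  intro hconn
  obtain ⟨l, h1, h2, hch, hc⟩ := hconn
  have hne : l ≠ [] := by rintro rfl; simp at h1
  set S := ((Finset.univ.filter fun a : Fin p => π.symm a < π.symm y).erase x) with hS
  have hmemS : ∀ a : Fin p, a ∈ S ↔ a ≠ x ∧ π.symm a < π.symm y := by
    intro a; simp [hS, Finset.mem_erase, Finset.mem_filter]
  have hxney : x ≠ y := by rintro rfl; exact lt_irrefl _ hxy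
  have hlen : 3 ≤ l.length := by
    rcases l with _ | ⟨a, l⟩
    · simp at h1
    rcases l with _ | ⟨b, l⟩
    · simp at h1 h2
      exact absurd (h1.symm.trans h2) hxney
    rcases l with _ | ⟨c, l⟩
    · simp at h1 h2 hch
      subst h1; subst h2
      exact (hnadj (List.isChain_pair.mp hch)).elim
    · simp only [List.length_cons]; omega
  obtain ⟨n, hln⟩ : ∃ n, l.length = n + 1 := ⟨l.length - 1, by omega⟩
  have hn2 : 2 ≤ n := by omega
  set v : ℕ → Fin p := fun i => l.getD i x with hvdef
  have hv : ∀ (m : ℕ) (h : m < l.length), l.get ⟨m, h⟩ = v m := by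
    intro m h; simp [hvdef, List.getD, List.getElem?_eq_getElem h]
  have hx : v 0 = x := by
    have h := List.head?_eq_head hne
    rw [h] at h1
    have h1' := Option.some.inj h1
    simp only [hvdef, List.getD_eq_getElem l x (by omega : 0 < l.length)]
    rw [← h1', List.head_eq_getElem]
  have hy' : v n = y := by
    have h := List.getLast?_eq_getLast hne
    rw [h] at h2
    have h2' := Option.some.inj h2
    simp only [hvdef, List.getD_eq_getElem l x (by omega : n < l.length)]
    rw [← h2', List.getLast_eq_getElem]
    congr 1
    omega
  have hadj : ∀ i, i + 1 < l.length → G.Adj (v i) (v (i + 1)) := by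
    intro i hi
    have h := List.isChain_iff_getElem.mp hch i (by omega)
    rw [← hv i (by omega), ← hv (i + 1) hi]
    simpa using h
  have hcv : ∀ m, 1 ≤ m → m + 1 < l.length →
      (G.Collider (v (m - 1)) (v m) (v (m + 1)) → ∃ d ∈ S, G.Desc (v m) d) ∧
      (¬ G.Collider (v (m - 1)) (v m) (v (m + 1)) → v m ∉ S) := by
    intro m h1m h2m
    have h := hc m h1m h2m
    simpa only [hv] using h
  have hn1 : n - 1 + 1 = n := by omega
  have hadjn := hadj (n - 1) (by omega)
  rw [hn1, hy'] at hadjn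
  rcases hadjn with hA | hB
  · -- Arrow (v (n-1)) y : v (n-1) is a non-collider in S
    have hvx : v (n - 1) ≠ x := by
      rintro h; exact hnadj (Or.inl (h ▸ hA))
    have hmem : v (n - 1) ∈ S := (hmemS _).mpr ⟨hvx, hlin _ _ hA⟩
    obtain ⟨-, h2c⟩ := hcv (n - 1) (by omega) (by omega)
    rw [hn1, hy'] at h2c
    refine h2c ?_ hmem
    rintro ⟨-, h'⟩
    exact G.acyclic y (Relation.TransGen.tail (Relation.TransGen.single h') hA)
  · -- Arrow y (v (n-1)) : trace back the descending chain from y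
    have hex : ∃ k, ∀ j, k ≤ j → j + 1 ≤ n → G.Arrow (v (j + 1)) (v j) := by
      refine ⟨n - 1, fun j hj hj' => ?_⟩
      have hje : j = n - 1 := by omega
      subst hje
      rw [hn1, hy']
      exact hB
    set k := Nat.find hex with hkdef
    have hk := Nat.find_spec hex
    have hkle : k ≤ n - 1 := Nat.find_min' hex (by
      intro j hj hj'
      have hje : j = n - 1 := by omega
      subst hje
      rw [hn1, hy']
      exact hB)
    have hdesc : ∀ m j, k ≤ j → j ≤ n → n - j ≤ m → G.Desc y (v j) := by
      intro m
      induction m with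
      | zero =>
        intro j _ hjn hm
        have hje : j = n := by omega
        subst hje
        rw [hy']
        exact Relation.ReflTransGen.refl
      | succ m ih =>
        intro j hkj hjn hm
        by_cases hje : j = n
        · subst hje; rw [hy']; exact Relation.ReflTransGen.refl
        · exact Relation.ReflTransGen.tail
            (ih (j + 1) (by omega) (by omega) (by omega)) (hk j hkj (by omega))
    rcases Nat.eq_zero_or_pos k with hk0 | hk0
    · have hdx : G.Desc y x := by
        have h := hdesc n 0 (by omega) (by omega) (by omega)
        rwa [hx] at h
      exact absurd (desc_mono G π hlin hdx) (not_le.mpr hxy)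
    · have hnP := Nat.find_min hex (show k - 1 < k by omega)
      push_neg at hnP
      obtain ⟨j, hj1, hj2, hj3⟩ := hnP
      have hjk : j = k - 1 := by
        by_contra h
        exact hj3 (hk j (by omega) hj2)
      subst hjk
      have hkk : k - 1 + 1 = k := by omega
      rw [hkk] at hj3 hj2
      have hadjk := hadj (k - 1) (by omega)
      rw [hkk] at hadjk
      have harr1 : G.Arrow (v (k - 1)) (v k) := by
        rcases hadjk with h | h
        · exact h
        · exact absurd h hj3
      have harr2 : G.Arrow (v (k + 1)) (v k) := hk k le_rfl (by omega)
      obtain ⟨hcol, -⟩ := hcv k hk0 (by omega)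
      obtain ⟨d, hdS, hdd⟩ := hcol ⟨harr1, harr2⟩
      have hyd : G.Desc y d :=
        Relation.ReflTransGen.trans (hdesc n k le_rfl (by omega) (by omega)) hdd
      have hle := desc_mono G π hlin hyd
      exact absurd hle (not_le.mpr ((hmemS d).mp hdS).2)

end GSP
end

section
/- Theorem 3 (the even permutohedron is a (p−1)-dimensional convex polytope): For p ≥ 3, let v = (3/2, 3/2, 3, 4, …, p) ∈ ℝ^p and let V be the set of all vectors obtained by permuting the coordinates of v (so |V| = p!/2). Then the convex hull of V is a convex polytope whose affine span has dimension p − 1, and every element of V is an extreme point of this convex hull (so the set of extreme points of conv(V) equals V). -/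
/-- key inequality: if `w` and `x` have the same sum of squares then
`∑ wᵢxᵢ ≤ ∑ xᵢ²`, with equality iff `w = x`. -/
lemma sq_sum_ineq {n : ℕ} (w x : Fin n → ℝ) (h : ∑ i, w i ^ 2 = ∑ i, x i ^ 2) :
    (∑ i, w i * x i ≤ ∑ i, x i ^ 2) ∧ (∑ i, w i * x i = ∑ i, x i ^ 2 → w = x) := by
  have hexp : ∑ i, (x i - w i) ^ 2
      = 2 * (∑ i, x i ^ 2) - 2 * (∑ i, w i * x i) := by
    have : ∀ i ∈ Finset.univ (α := Fin n),
        (x i - w i) ^ 2 = (x i ^ 2 + w i ^ 2) - 2 * (w i * x i) := by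
      intro i _; ring
    rw [Finset.sum_congr rfl this, Finset.sum_sub_distrib, Finset.sum_add_distrib,
      ← Finset.mul_sum, h]
    ring
  have hnn : (0:ℝ) ≤ ∑ i, (x i - w i) ^ 2 :=
    Finset.sum_nonneg fun i _ => sq_nonneg _
  constructor
  · nlinarith
  · intro heq
    have hz : ∑ i, (x i - w i) ^ 2 = 0 := by rw [hexp, heq]; ring
    funext i
    have := (Finset.sum_eq_zero_iff_of_nonneg fun i _ => sq_nonneg (x i - w i)).1 hz i
      (Finset.mem_univ i)
    have : x i - w i = 0 := by
      have := sq_eq_zero_iff.mp this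
      exact this
    linarith

/-- every point of a permutation orbit is an extreme point of its convex hull,
provided the base vector is not constant. -/
lemma orbit_subset_extremePoints {n : ℕ} (v : Fin n → ℝ)
    (hnc : ∃ a b : Fin n, v a ≠ v b) :
    {w | ∃ σ : Equiv.Perm (Fin n), w = v ∘ σ} ⊆
      Set.extremePoints ℝ (convexHull ℝ {w | ∃ σ : Equiv.Perm (Fin n), w = v ∘ σ}) := by
  set V : Set (Fin n → ℝ) := {w | ∃ σ : Equiv.Perm (Fin n), w = v ∘ σ} with hV
  intro x hx
  obtain ⟨τ, hτ⟩ := hx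
  -- sums of squares are constant on V
  have hsq : ∀ w ∈ V, ∑ i, w i ^ 2 = ∑ i, x i ^ 2 := by
    rintro w ⟨σ, rfl⟩
    rw [hτ]
    have h1 : ∑ i, (v ∘ σ) i ^ 2 = ∑ i, v i ^ 2 :=
      Equiv.sum_comp σ (fun i => v i ^ 2)
    have h2 : ∑ i, (v ∘ τ) i ^ 2 = ∑ i, v i ^ 2 :=
      Equiv.sum_comp τ (fun i => v i ^ 2)
    rw [h1, h2]
  set F : (Fin n → ℝ) → ℝ := fun z => ∑ i, z i * x i with hF
  set C : ℝ := ∑ i, x i ^ 2 with hC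
  have hlin : IsLinearMap ℝ F := by
    constructor
    · intro a b; simp [hF, add_mul, Finset.sum_add_distrib]
    · intro c a; simp [hF, Finset.mul_sum, smul_eq_mul, mul_assoc]
  have hbound : ∀ w ∈ V, F w ≤ C := fun w hw => (sq_sum_ineq w x (hsq w hw)).1
  have heq : ∀ w ∈ V, F w = C → w = x := fun w hw => (sq_sum_ineq w x (hsq w hw)).2
  have hxV : x ∈ V := ⟨τ, hτ⟩
  have hxC : F x = C := by
    simp only [hF, hC]
    exact Finset.sum_congr rfl fun i _ => (sq (x i)).symm
  -- V \ {x} is nonempty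
  obtain ⟨a, b, hab⟩ := hnc
  have hWne : (V \ {x}).Nonempty := by
    refine ⟨x ∘ Equiv.swap (τ⁻¹ a) (τ⁻¹ b), ⟨?_, ?_⟩⟩
    · exact ⟨τ * Equiv.swap (τ⁻¹ a) (τ⁻¹ b), by rw [hτ]; rfl⟩
    · simp only [Set.mem_singleton_iff]
      intro hcon
      have := congrFun hcon (τ⁻¹ a)
      simp only [Function.comp_apply, Equiv.swap_apply_left, hτ] at this
      simp at this
      exact hab (by simpa using this.symm)
  have hVins : V = insert x (V \ {x}) := by
    rw [Set.insert_diff_singleton, Set.insert_eq_self.2 hxV]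
  -- strict bound on the convex hull of V \ {x}
  have hstrict : convexHull ℝ (V \ {x}) ⊆ {z | F z < C} := by
    apply convexHull_min _ (convex_halfSpace_lt hlin C)
    intro w hw
    exact lt_of_le_of_ne (hbound w hw.1) fun h => hw.2 (heq w hw.1 h)
  -- F ≤ C on the hull
  have hhull : convexHull ℝ V ⊆ {z | F z ≤ C} := by
    apply convexHull_min _ (convex_halfSpace_le hlin C)
    exact fun w hw => hbound w hw
  have hFadd : ∀ u w : Fin n → ℝ, F (u + w) = F u + F w := fun u w => hlin.map_add u w
  have hFsmul : ∀ (c : ℝ) (u : Fin n → ℝ), F (c • u) = c * F u := fun c u => hlin.map_smul c u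
  -- the face argument
  have hface : ∀ y ∈ convexHull ℝ V, F y = C → y = x := by
    intro y hy hyC
    rw [hVins, convexHull_insert hWne, mem_convexJoin] at hy
    obtain ⟨a', ha', b', hb', hseg⟩ := hy
    rw [Set.mem_singleton_iff] at ha'; subst ha'
    obtain ⟨s, t, hs, ht, hst, hyeq⟩ := hseg
    have hFb : F b' < C := hstrict hb'
    have hFy : F y = s * C + t * F b' := by
      rw [← hyeq, hFadd, hFsmul, hFsmul, hxC]
    have hsum1 : s * C + t * C = C := by rw [← add_mul, hst, one_mul]
    have ht0 : t = 0 := by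
      rcases eq_or_lt_of_le ht with h | h
      · exact h.symm
      · exfalso
        have h2 := mul_lt_mul_of_pos_left hFb h
        linarith
    have hs1 : s = 1 := by linarith
    rw [← hyeq, ht0, hs1]; simp
  refine ⟨subset_convexHull ℝ V hxV, ?_⟩
  intro y hy z hz hseg
  obtain ⟨s, t, hs, ht, hst, hxeq⟩ := hseg
  have hFx : s * F y + t * F z = C := by
    rw [← hxC, ← hxeq, hFadd, hFsmul, hFsmul]
  have hFy : F y ≤ C := hhull hy
  have hFz : F z ≤ C := hhull hz
  have hsum1 : s * C + t * C = C := by rw [← add_mul, hst, one_mul]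
  have hFyC : F y = C := by
    by_contra hne
    have h1 : F y < C := lt_of_le_of_ne hFy hne
    have h2 := mul_lt_mul_of_pos_left h1 hs
    have h3 := mul_le_mul_of_nonneg_left hFz ht.le
    linarith
  have hFzC : F z = C := by
    by_contra hne
    have h1 : F z < C := lt_of_le_of_ne hFz hne
    have h2 := mul_lt_mul_of_pos_left h1 ht
    have h3 := mul_le_mul_of_nonneg_left hFy hs.le
    linarith
  exact hface y hy hFyC

/-- Theorem 3: the even permutohedron is a
`(p-1)`-dimensional convex polytope. For `p ≥ 3`, let
`v = (3/2, 3/2, 3, 4, …, p) ∈ ℝ^p` and let `V` be the set of all coordinate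
permutations of `v`. Then `V` is finite (so its convex hull is a convex
polytope), the affine span of `V` has dimension `p - 1`, and the set of
extreme points of `convexHull ℝ V` is exactly `V`. -/
theorem even_permutohedron_is_polytope_of_dim_p_sub_one
    (p : ℕ) (hp : 3 ≤ p)
    (v : Fin p → ℝ)
    (hv : v = fun k : Fin p => if (k : ℕ) < 2 then (3 / 2 : ℝ) else (k : ℕ) + 1)
    (V : Set (Fin p → ℝ))
    (hV : V = {w | ∃ σ : Equiv.Perm (Fin p), w = v ∘ σ}) :
    V.Finite ∧
    Module.finrank ℝ (affineSpan ℝ V).direction = p - 1 ∧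
    Set.extremePoints ℝ (convexHull ℝ V) = V := by
  have hvV : v ∈ V := by rw [hV]; exact ⟨1, by simp⟩
  -- basic values of v
  have hv0 : v ⟨0, by omega⟩ = 3 / 2 := by rw [hv]; norm_num
  have hv2 : v ⟨2, by omega⟩ = 3 := by rw [hv]; norm_num
  have hnc : ∃ a b : Fin p, v a ≠ v b :=
    ⟨⟨0, by omega⟩, ⟨2, by omega⟩, by rw [hv0, hv2]; norm_num⟩
  refine ⟨?_, ?_, ?_⟩
  · -- finiteness
    have : V = Set.range (fun σ : Equiv.Perm (Fin p) => v ∘ ⇑σ) := by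
      ext w; simp [hV, Set.mem_range, eq_comm]
    rw [this]
    exact Set.finite_range _
  · -- dimension
    set L : (Fin p → ℝ) →ₗ[ℝ] ℝ := ∑ i, LinearMap.proj i with hLdef
    have hL : ∀ y : Fin p → ℝ, L y = ∑ i, y i := by
      intro y; simp [hLdef]
    have hsum : ∀ w ∈ V, ∑ i, w i = ∑ i, v i := by
      rw [hV]; rintro w ⟨σ, rfl⟩
      exact Equiv.sum_comp σ v
    set i2 : Fin p := ⟨2, by omega⟩ with hi2
    have hvne : ∀ i : Fin p, i ≠ i2 → v i ≠ v i2 := by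
      intro i hi
      have hne2 : (i : ℕ) ≠ 2 := fun h => hi (Fin.ext h)
      rw [hv2, hv]
      by_cases h : (i : ℕ) < 2
      · simp [h]; norm_num
      · simp [h]
        have : 3 ≤ (i : ℕ) := by omega
        have : (3 : ℝ) ≤ (i : ℕ) := by exact_mod_cast this
        intro hcon
        linarith
    have hkey : ∀ i : Fin p, i ≠ i2 →
        (Pi.single i (1:ℝ) - Pi.single i2 1) ∈ vectorSpan ℝ V := by
      intro i hi
      have hwV : (v ∘ ⇑(Equiv.swap i i2)) ∈ V := by rw [hV]; exact ⟨Equiv.swap i i2, rfl⟩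
      have hdiff : (v ∘ ⇑(Equiv.swap i i2)) - v
          = (v i2 - v i) • (Pi.single i (1:ℝ) - Pi.single i2 1) := by
        funext j
        by_cases hji : j = i
        · subst hji
          simp [Equiv.swap_apply_left, Pi.single_eq_same, Pi.single_eq_of_ne hi]
        · by_cases hj2 : j = i2
          · subst hj2
            simp [Equiv.swap_apply_right, Pi.single_eq_same,
              Pi.single_eq_of_ne (Ne.symm hi)]
          · simp [Equiv.swap_apply_of_ne_of_ne hji hj2,
              Pi.single_eq_of_ne hji, Pi.single_eq_of_ne hj2]
      have hne : v i2 - v i ≠ 0 := sub_ne_zero.2 (Ne.symm (hvne i hi))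
      have hmem : (v ∘ ⇑(Equiv.swap i i2)) - v ∈ vectorSpan ℝ V :=
        vsub_mem_vectorSpan ℝ hwV hvV
      have : (Pi.single i (1:ℝ) - Pi.single i2 1)
          = (v i2 - v i)⁻¹ • ((v ∘ ⇑(Equiv.swap i i2)) - v) := by
        rw [hdiff, smul_smul, inv_mul_cancel₀ hne, one_smul]
      rw [this]
      exact Submodule.smul_mem _ _ hmem
    have hspan : vectorSpan ℝ V = LinearMap.ker L := by
      apply le_antisymm
      · rw [vectorSpan_def]
        apply Submodule.span_le.2
        rintro d ⟨w1, hw1, w2, hw2, rfl⟩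
        have : L (w1 -ᵥ w2) = 0 := by
          have : w1 -ᵥ w2 = w1 - w2 := rfl
          rw [this, map_sub, hL, hL, hsum w1 hw1, hsum w2 hw2, sub_self]
        exact LinearMap.mem_ker.2 this
      · intro y hy
        have hy0 : ∑ i, y i = 0 := by rw [← hL y]; exact LinearMap.mem_ker.1 hy
        have hdecomp : y = ∑ i ∈ Finset.univ.erase i2,
            y i • (Pi.single i (1:ℝ) - Pi.single i2 1) := by
          have hsingle : ∀ (c : ℝ) (i : Fin p),
              c • (Pi.single i (1:ℝ) : Fin p → ℝ) = (Pi.single i c : Fin p → ℝ) := by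
            intro c i; funext j
            by_cases h : j = i
            · subst h; simp
            · simp [Pi.single_eq_of_ne h]
          rw [Finset.sum_congr rfl fun i _ => smul_sub (y i) (Pi.single i (1:ℝ) : Fin p → ℝ) (Pi.single i2 (1:ℝ) : Fin p → ℝ)]
          rw [Finset.sum_sub_distrib]
          rw [Finset.sum_congr rfl fun i _ => hsingle (y i) i]
          have h1 : ∑ i ∈ Finset.univ.erase i2, Pi.single i (y i)
              = y - Pi.single i2 (y i2) := by
            have := Finset.add_sum_erase Finset.univ (fun i => Pi.single i (y i))
              (Finset.mem_univ i2)
            have huniv : ∑ i, Pi.single i (y i) = y := by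
              funext j; simp [Finset.sum_apply, Pi.single_apply]
            rw [huniv] at this
            rw [eq_sub_iff_add_eq, add_comm]
            exact this
          have h2 : ∑ i ∈ Finset.univ.erase i2, y i • (Pi.single i2 (1:ℝ) : Fin p → ℝ)
              = (Pi.single i2 (-(y i2)) : Fin p → ℝ) := by
            rw [← Finset.sum_smul]
            have : ∑ i ∈ Finset.univ.erase i2, y i = -(y i2) := by
              have := Finset.add_sum_erase Finset.univ y (Finset.mem_univ i2)
              rw [hy0] at this
              linarith
            rw [this, hsingle (-(y i2)) i2]
          rw [h1, h2]
          have h3 : (Pi.single i2 (-(y i2)) : Fin p → ℝ)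
              = -(Pi.single i2 (y i2) : Fin p → ℝ) := by
            funext j
            by_cases h : j = i2
            · subst h; simp
            · simp [Pi.single_eq_of_ne h]
          rw [h3]
          abel
        rw [hdecomp]
        exact Submodule.sum_mem _ fun i hi =>
          Submodule.smul_mem _ _ (hkey i (Finset.ne_of_mem_erase hi))
    have hsurj : Function.Surjective L := by
      intro r
      refine ⟨Pi.single i2 r, ?_⟩
      rw [hL]
      simp [Pi.single_apply]
    have hrn := LinearMap.finrank_range_add_finrank_ker L
    rw [LinearMap.range_eq_top.2 hsurj, finrank_top] at hrn
    rw [direction_affineSpan, hspan]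
    have hdom : Module.finrank ℝ (Fin p → ℝ) = p := by simp
    rw [hdom] at hrn
    have : Module.finrank ℝ ℝ = 1 := Module.finrank_self ℝ
    omega
  · -- extreme points
    apply Set.Subset.antisymm
    · rw [hV]; exact extremePoints_convexHull_subset
    · rw [hV]; exact orbit_subset_extremePoints v hnc
end
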